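/- With L(k, k̇, t) = ½‖k ṙ_T - k̇ α‖², where α(t) = r_P - r_T(t), the Euler-Lagrange equation ∂L/∂k - d/dt(∂L/∂k̇) = 0 is equivalent to k̈⟨α,α⟩ + 2k̇⟨α̇,α⟩ + k⟨α̈,α⟩ = 0, i.e. ⟨(d²/dt²)(kα), α⟩ = 0. -/

import Mathlib

open RealInnerProductSpace

theorem euler_lagrange_motion_camouflage
    (rT : ℝ → EuclideanSpace ℝ (Fin 3)) (rP : EuclideanSpace ℝ (Fin 3))
    (k : ℝ → ℝ)
    (hk : Differentiable ℝ k) (hk' : Differentiable ℝ (deriv k))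
    (hT : Differentiable ℝ rT) (hT' : Differentiable ℝ (deriv rT))
    (α : ℝ → EuclideanSpace ℝ (Fin 3)) (hα : ∀ t, α t = rP - rT t)
    -- ∂L/∂k where L = ½‖k ṙ_T - k̇ α‖²
    (dLdk : ℝ → ℝ)
    (hdLdk : ∀ t, dLdk t = ⟪k t • deriv rT t - deriv k t • α t, deriv rT t⟫)
    -- ∂L/∂k̇
    (dLdk' : ℝ → ℝ)
    (hdLdk' : ∀ t, dLdk' t = ⟪k t • deriv rT t - deriv k t • α t, -α t⟫)
    (t : ℝ) :
    (dLdk t - deriv dLdk' t = 0 ↔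
      deriv (deriv k) t * ⟪α t, α t⟫ + 2 * (deriv k t * ⟪deriv α t, α t⟫)
        + k t * ⟪deriv (deriv α) t, α t⟫ = 0) ∧
    (deriv (deriv k) t * ⟪α t, α t⟫ + 2 * (deriv k t * ⟪deriv α t, α t⟫)
        + k t * ⟪deriv (deriv α) t, α t⟫ = 0 ↔
      ⟪deriv (deriv (fun s => k s • α s)) t, α t⟫ = 0) := by
  have hαe : α = fun s => rP - rT s := funext hα
  subst hαe
  -- first derivative of α
  have hαd : ∀ s : ℝ, HasDerivAt (fun u => rP - rT u) (-(deriv rT s)) s := by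
    intro s
    have h := (hasDerivAt_const s rP).sub (hT s).hasDerivAt
    rw [zero_sub] at h
    exact h
  have hderivα : deriv (fun u => rP - rT u) = fun s => -(deriv rT s) :=
    funext fun s => (hαd s).deriv
  have hderivα2 : deriv (deriv (fun u => rP - rT u)) t = -(deriv (deriv rT) t) := by
    rw [hderivα]
    exact ((hT' t).hasDerivAt.neg).deriv
  -- derivatives of g = k • α
  set g : ℝ → EuclideanSpace ℝ (Fin 3) := fun s => k s • (rP - rT s) with hgdef
  have hg : ∀ s : ℝ, HasDerivAt g (k s • (-(deriv rT s)) + deriv k s • (rP - rT s)) s :=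
    fun s => (hk s).hasDerivAt.smul (hαd s)
  have hderivg : deriv g = fun s => k s • (-(deriv rT s)) + deriv k s • (rP - rT s) :=
    funext fun s => (hg s).deriv
  set D2 : EuclideanSpace ℝ (Fin 3) :=
    (k t • (-(deriv (deriv rT) t)) + deriv k t • (-(deriv rT t))) +
      (deriv k t • (-(deriv rT t)) + deriv (deriv k) t • (rP - rT t)) with hD2def
  have hg2 : HasDerivAt (deriv g) D2 t := by
    rw [hderivg]
    exact ((hk t).hasDerivAt.smul ((hT' t).hasDerivAt.neg)).add
      ((hk' t).hasDerivAt.smul (hαd t))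
  have hderivg2 : deriv (deriv g) t = D2 := hg2.deriv
  -- rewrite dLdk' as inner of deriv g with α
  have hdL : dLdk' = fun s => ⟪deriv g s, rP - rT s⟫ := by
    funext s
    rw [hdLdk' s, hderivg]
    have : k s • deriv rT s - deriv k s • (rP - rT s)
        = -(k s • (-(deriv rT s)) + deriv k s • (rP - rT s)) := by module
    rw [this, inner_neg_neg]
  -- derivative of dLdk'
  have hdLd : deriv dLdk' t = ⟪deriv g t, -(deriv rT t)⟫ + ⟪D2, rP - rT t⟫ := by
    rw [hdL]
    exact (HasDerivAt.inner ℝ hg2 (hαd t)).deriv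
  have hdLk : dLdk t = ⟪deriv g t, -(deriv rT t)⟫ := by
    rw [hdLdk t, hderivg]
    have : k t • deriv rT t - deriv k t • (rP - rT t)
        = -(k t • (-(deriv rT t)) + deriv k t • (rP - rT t)) := by module
    rw [this, inner_neg_left, inner_neg_right]
  have key : dLdk t - deriv dLdk' t = -⟪D2, rP - rT t⟫ := by
    rw [hdLd, hdLk]; ring
  have hexpand : deriv (deriv k) t * ⟪(rP - rT t : EuclideanSpace ℝ (Fin 3)), rP - rT t⟫
      + 2 * (deriv k t * ⟪deriv (fun u => rP - rT u) t, rP - rT t⟫)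
      + k t * ⟪deriv (deriv (fun u => rP - rT u)) t, rP - rT t⟫
      = ⟪D2, rP - rT t⟫ := by
    rw [hderivα2, hderivα, hD2def]
    simp only [inner_add_left, real_inner_smul_left]
    ring
  constructor
  · rw [key, hexpand, neg_eq_zero]
  · rw [hexpand, hderivg2]
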